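/- Suppose f is analytic on a Stolz region S_r(ζ) at ζ ∈ 𝕋, b ∈ ℂ, and assume: for each sufficiently small δ > 0 there is a set E_δ ⊆ B(ζ,δ) with γ(E_δ)/δ → 0 and sup{ |f(λ) − b| : λ ∈ S_r(ζ) ∩ B(ζ,δ) ∖ E_δ } → 0 as δ → 0. Assume further the mean-value capacity estimate: there exist absolute constants ε₁ > 0 and C₁ < ∞ such that whenever R > 0 and E ⊆ closure(B(0,R)) with γ(E) < Rε₁, every function g analytic on a neighborhood of closure(B(0,R)) satisfies |g(λ)| ≤ (C₁/(πR²)) ∫_{closure(B(0,R))∖E} |g| dA for all λ ∈ B(0, R/2). Then for every 0 < ρ < r, f(λ) → b as λ → ζ within S_ρ(ζ). -/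

import Mathlib

open MeasureTheory Filter Metric Topology
open scoped ENNReal

/-- Analytic capacity of a compact set `K ⊆ ℂ`. -/
noncomputable def gammaCapCompact (K : Set ℂ) : ℝ≥0∞ :=
  sSup {c : ℝ≥0∞ | ∃ (f : ℂ → ℂ) (finf d : ℂ),
    DifferentiableOn ℂ f Kᶜ ∧ (∀ z ∈ Kᶜ, ‖f z‖ ≤ 1) ∧
    Tendsto f (Bornology.cobounded ℂ) (𝓝 finf) ∧
    Tendsto (fun z => z * (f z - finf)) (Bornology.cobounded ℂ) (𝓝 d) ∧
    c = ENNReal.ofReal ‖d‖}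

/-- Analytic capacity of an arbitrary set `E ⊆ ℂ`. -/
noncomputable def gammaCap (E : Set ℂ) : ℝ≥0∞ :=
  ⨆ (K : Set ℂ) (_ : IsCompact K) (_ : K ⊆ E), gammaCapCompact K

/-- The Stolz region `S_r(ζ)`: interior of the convex hull of `{|z| ≤ r} ∪ {ζ}`. -/
noncomputable def stolz (r : ℝ) (ζ : ℂ) : Set ℂ :=
  interior (convexHull ℝ (Metric.closedBall (0 : ℂ) r ∪ {ζ}))

lemma tendsto_sub_const_cobounded' (a : ℂ) :
    Tendsto (fun z : ℂ => z - a) (Bornology.cobounded ℂ) (Bornology.cobounded ℂ) := by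
  apply tendsto_norm_atTop_iff_cobounded.mp
  have h1 : Tendsto (fun z : ℂ => ‖z‖ - ‖a‖) (Bornology.cobounded ℂ) atTop :=
    (tendsto_atTop_add_const_right _ (-‖a‖) tendsto_norm_cobounded_atTop).congr
      (fun z => by ring)
  exact tendsto_atTop_mono (fun z => norm_sub_norm_le z a) h1

lemma gammaCapCompact_le_image_add (K : Set ℂ) (a : ℂ) :
    gammaCapCompact K ≤ gammaCapCompact ((fun z => z + a) '' K) := by
  apply sSup_le_sSup
  rintro c ⟨f, finf, d, hdiff, hbnd, hinf, hd, rfl⟩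
  have hmem : ∀ z : ℂ, z ∈ ((fun z => z + a) '' K)ᶜ → z - a ∈ Kᶜ := by
    intro z hz hzK
    exact hz ⟨z - a, hzK, by ring⟩
  have T := tendsto_sub_const_cobounded' a
  refine ⟨fun z => f (z - a), finf, d, ?_, ?_, ?_, ?_, rfl⟩
  · exact hdiff.comp ((differentiable_id.sub_const a).differentiableOn) hmem
  · exact fun z hz => hbnd _ (hmem z hz)
  · exact hinf.comp T
  · have h1 : Tendsto (fun z : ℂ => (z - a) * (f (z - a) - finf))
        (Bornology.cobounded ℂ) (𝓝 d) := hd.comp T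
    have h2 : Tendsto (fun z : ℂ => a * (f (z - a) - finf))
        (Bornology.cobounded ℂ) (𝓝 0) := by
      have h3 : Tendsto (fun z : ℂ => f (z - a) - finf) (Bornology.cobounded ℂ) (𝓝 0) := by
        simpa using (hinf.comp T).sub (tendsto_const_nhds (x := finf))
      simpa using tendsto_const_nhds.mul h3
    have := h1.add h2
    rw [add_zero] at this
    refine this.congr fun z => by ring

lemma gammaCap_mono {E F : Set ℂ} (h : E ⊆ F) : gammaCap E ≤ gammaCap F := by
  refine iSup_le fun K => iSup_le fun hK => iSup_le fun hKE => ?_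
  exact le_iSup_of_le K (le_iSup_of_le hK (le_iSup_of_le (hKE.trans h) le_rfl))

lemma gammaCap_preimage_add_le (E : Set ℂ) (a : ℂ) :
    gammaCap ((fun z => z + a) ⁻¹' E) ≤ gammaCap E := by
  refine iSup_le fun K => iSup_le fun hK => iSup_le fun hKE => ?_
  have h1 : (fun z => z + a) '' K ⊆ E := by rintro _ ⟨x, hx, rfl⟩; exact hKE hx
  refine le_trans (gammaCapCompact_le_image_add K a) ?_
  exact le_iSup_of_le ((fun z => z + a) '' K)
    (le_iSup_of_le (hK.image (continuous_id.add continuous_const)) (le_iSup_of_le h1 le_rfl))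

lemma stolz_subset_ball {ρ : ℝ} (hρ1 : ρ ≤ 1) {ζ : ℂ} (hζ : ‖ζ‖ = 1) :
    stolz ρ ζ ⊆ Metric.ball (0 : ℂ) 1 := by
  have h1 : convexHull ℝ (Metric.closedBall (0 : ℂ) ρ ∪ {ζ}) ⊆ Metric.closedBall 0 1 := by
    apply convexHull_min
    · refine Set.union_subset (Metric.closedBall_subset_closedBall hρ1) ?_
      intro z hz
      simp only [Set.mem_singleton_iff] at hz
      subst hz
      simp [Metric.mem_closedBall, dist_eq_norm, hζ]
    · exact convex_closedBall _ _
  calc stolz ρ ζ ⊆ interior (Metric.closedBall (0 : ℂ) 1) := interior_mono h1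
    _ = Metric.ball 0 1 := interior_closedBall _ one_ne_zero

lemma closedBall_subset_stolz {r ρ : ℝ} (hρ0 : 0 < ρ) (hρr : ρ < r) (hr1 : r < 1)
    {ζ : ℂ} (hζ : ‖ζ‖ = 1) {l : ℂ} (hl : l ∈ stolz ρ ζ) :
    Metric.closedBall l ((r - ρ) / (2 * (1 + ρ)) * ‖l - ζ‖) ⊆ stolz r ζ := by
  have hρ1 : ρ < 1 := hρr.trans hr1
  have hlnorm : ‖l‖ < 1 := by
    have := stolz_subset_ball hρ1.le hζ hl
    simpa [Metric.mem_ball, dist_eq_norm] using this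
  -- representation
  have hl' : l ∈ convexHull ℝ (Metric.closedBall (0 : ℂ) ρ ∪ {ζ}) := interior_subset hl
  rw [Set.union_singleton, convexHull_insert ⟨0, by simp [hρ0.le]⟩,
    (convex_closedBall _ _).convexHull_eq] at hl'
  rw [mem_convexJoin] at hl'
  obtain ⟨x, hx, u, hu, hseg⟩ := hl'
  rw [Set.mem_singleton_iff] at hx
  rw [hx] at hseg
  obtain ⟨a, t, ha, ht, hat, heq⟩ := hseg
  have hunorm : ‖u‖ ≤ ρ := by simpa [Metric.mem_closedBall, dist_eq_norm] using hu
  -- t > 0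
  have ht0 : 0 < t := by
    rcases lt_or_eq_of_le ht with h | h
    · exact h
    · exfalso
      have : a = 1 := by linarith
      rw [← heq, ← h, this] at hlnorm
      simp [hζ] at hlnorm
  have ha' : a = 1 - t := by linarith
  have hlζ : l - ζ = t • (u - ζ) := by
    rw [← heq, ha']
    module
  have hdle : ‖l - ζ‖ ≤ t * (1 + ρ) := by
    rw [hlζ, norm_smul, Real.norm_eq_abs, abs_of_pos ht0]
    have : ‖u - ζ‖ ≤ 1 + ρ := by
      calc ‖u - ζ‖ ≤ ‖u‖ + ‖ζ‖ := norm_sub_le _ _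
        _ ≤ ρ + 1 := by rw [hζ]; linarith
        _ = 1 + ρ := by ring
    exact mul_le_mul_of_nonneg_left this ht0.le
  intro w hw
  rw [Metric.mem_closedBall, dist_eq_norm] at hw
  have hwl : ‖w - l‖ ≤ t * (r - ρ) / 2 := by
    calc ‖w - l‖ ≤ (r - ρ) / (2 * (1 + ρ)) * ‖l - ζ‖ := hw
      _ ≤ (r - ρ) / (2 * (1 + ρ)) * (t * (1 + ρ)) := by
          exact mul_le_mul_of_nonneg_left hdle (div_nonneg (by linarith) (by linarith))
      _ = t * (r - ρ) / 2 := by field_simp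
  set v : ℂ := u + t⁻¹ • (w - l) with hv
  have hvnorm : ‖v‖ < r := by
    have : ‖t⁻¹ • (w - l)‖ ≤ (r - ρ) / 2 := by
      rw [norm_smul, Real.norm_eq_abs, abs_of_pos (inv_pos.mpr ht0)]
      rw [inv_mul_le_iff₀ ht0]
      calc ‖w - l‖ ≤ t * (r - ρ) / 2 := hwl
        _ = t * ((r - ρ) / 2) := by ring
    calc ‖v‖ ≤ ‖u‖ + ‖t⁻¹ • (w - l)‖ := norm_add_le _ _
      _ ≤ ρ + (r - ρ) / 2 := add_le_add hunorm this
      _ < r := by linarith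
  have hwv : w = t • v + a • ζ := by
    rw [hv, smul_add, smul_inv_smul₀ (ne_of_gt ht0), ← heq, ha']
    module
  have hvC : v ∈ interior (convexHull ℝ (Metric.closedBall (0 : ℂ) r ∪ {ζ})) := by
    apply interior_maximal ?_ Metric.isOpen_ball (mem_ball_zero_iff.mpr hvnorm)
    calc Metric.ball (0 : ℂ) r ⊆ Metric.closedBall 0 r := Metric.ball_subset_closedBall
      _ ⊆ Metric.closedBall (0 : ℂ) r ∪ {ζ} := Set.subset_union_left
      _ ⊆ convexHull ℝ _ := subset_convexHull _ _
  have hζC : ζ ∈ convexHull ℝ (Metric.closedBall (0 : ℂ) r ∪ {ζ}) :=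
    subset_convexHull _ _ (Set.mem_union_right _ rfl)
  have := (convex_convexHull ℝ _).combo_interior_self_mem_interior hvC hζC ht0 ha
    (by linarith : t + a = 1)
  rw [hwv]
  exact this

/-- Lemma 3.8: Suppose `f` is analytic on `S_r(ζ)` at `ζ ∈ 𝕋`, and for
each small `δ > 0` there is an exceptional set `E δ ⊆ B(ζ,δ)` with `γ(E δ)/δ → 0`
and `sup{|f(λ) − b| : λ ∈ S_r(ζ) ∩ B(ζ,δ) ∖ E δ} → 0` as `δ → 0`.  Assume also the
capacitary mean-value estimate (Lemma B of Aleman–Richter–Sundberg).  Then for every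
`0 < ρ < r`, `f(λ) → b` as `λ → ζ` within `S_ρ(ζ)`. -/
theorem stmt11 (ζ : ℂ) (hζ : ‖ζ‖ = 1) (r : ℝ) (hr0 : 0 < r) (hr1 : r < 1)
    (f : ℂ → ℂ) (hf : DifferentiableOn ℂ f (stolz r ζ)) (b : ℂ)
    (E : ℝ → Set ℂ) (δ₀ : ℝ) (hδ₀ : 0 < δ₀)
    (hEsub : ∀ δ : ℝ, 0 < δ → δ < δ₀ → E δ ⊆ Metric.ball ζ δ)
    (hcap : Tendsto (fun δ : ℝ => gammaCap (E δ) / ENNReal.ofReal δ) (𝓝[>] (0 : ℝ))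
      (𝓝 0))
    (happrox : ∀ ε : ℝ, 0 < ε → ∃ δ₁ > (0 : ℝ), ∀ δ : ℝ, 0 < δ → δ < δ₁ →
      ∀ w ∈ (stolz r ζ ∩ Metric.ball ζ δ) \ E δ, ‖f w - b‖ ≤ ε)
    (hmv : ∃ ε₁ > (0 : ℝ), ∃ C₁ : ℝ, ∀ R : ℝ, 0 < R →
      ∀ Eset ⊆ Metric.closedBall (0 : ℂ) R, gammaCap Eset < ENNReal.ofReal (R * ε₁) →
        ∀ g : ℂ → ℂ,
          (∃ U : Set ℂ, IsOpen U ∧ Metric.closedBall (0 : ℂ) R ⊆ U ∧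
            DifferentiableOn ℂ g U) →
          ∀ w ∈ Metric.ball (0 : ℂ) (R / 2),
            ‖g w‖ ≤ C₁ / (Real.pi * R ^ 2) *
              ∫ x in Metric.closedBall (0 : ℂ) R \ Eset, ‖g x‖ ∂(volume : Measure ℂ)) :
    ∀ ρ : ℝ, 0 < ρ → ρ < r → Tendsto f (𝓝[stolz ρ ζ] ζ) (𝓝 b) := by
  intro ρ hρ0 hρr
  obtain ⟨ε₁, hε₁, C₁, hMV⟩ := hmv
  set c : ℝ := (r - ρ) / (2 * (1 + ρ)) with hcdef
  have hrρ : (0:ℝ) < r - ρ := by linarith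
  have hc0 : 0 < c := by positivity
  have hc1 : c < 1 := by
    rw [hcdef, div_lt_one (by linarith)]
    linarith
  set C : ℝ := max C₁ 1 with hCdef
  have hC0 : (0:ℝ) < C := lt_of_lt_of_le one_pos (le_max_right _ _)
  rw [Metric.tendsto_nhdsWithin_nhds]
  intro ε hε
  set ε' : ℝ := ε / (2 * C) with hε'def
  have hε'0 : 0 < ε' := by positivity
  obtain ⟨δ₁, hδ₁, hap⟩ := happrox ε' hε'0
  -- eventual capacity bound
  have hpos : (0:ℝ≥0∞) < ENNReal.ofReal (c * ε₁ / 2) := by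
    rw [ENNReal.ofReal_pos]; positivity
  have hev : ∀ᶠ δ in 𝓝[>] (0:ℝ),
      gammaCap (E δ) / ENNReal.ofReal δ < ENNReal.ofReal (c * ε₁ / 2) :=
    hcap.eventually_lt_const hpos
  rw [eventually_nhdsWithin_iff, Metric.eventually_nhds_iff] at hev
  obtain ⟨δ₂, hδ₂, hcap2⟩ := hev
  refine ⟨min δ₁ δ₂ / 2, by positivity, ?_⟩
  intro l hl hdist
  set d : ℝ := ‖l - ζ‖ with hddef
  have hlnorm : ‖l‖ < 1 := by
    have := stolz_subset_ball (by linarith : ρ ≤ 1) hζ hl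
    simpa [Metric.mem_ball, dist_eq_norm] using this
  have hlζ : l ≠ ζ := fun h => by rw [h, hζ] at hlnorm; exact lt_irrefl _ hlnorm
  have hd0 : 0 < d := by
    rw [hddef, norm_pos_iff]
    exact sub_ne_zero.mpr hlζ
  have hdist' : d < min δ₁ δ₂ / 2 := by rwa [dist_eq_norm] at hdist
  set δ : ℝ := 2 * d with hδdef
  have hδpos : 0 < δ := by positivity
  have hδδ₁ : δ < δ₁ := by
    have := min_le_left δ₁ δ₂; simp only [hδdef]; linarith
  have hδδ₂ : δ < δ₂ := by
    have := min_le_right δ₁ δ₂; simp only [hδdef]; linarith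
  set R : ℝ := c * d with hRdef
  have hR0 : 0 < R := by positivity
  -- geometric inclusions
  have hball : Metric.closedBall l R ⊆ stolz r ζ := by
    have := closedBall_subset_stolz hρ0 hρr hr1 hζ hl
    rwa [← hddef, ← hcdef, ← hRdef] at this
  have hballδ : Metric.closedBall l R ⊆ Metric.ball ζ δ := by
    intro w hw
    rw [Metric.mem_closedBall] at hw
    rw [Metric.mem_ball]
    calc dist w ζ ≤ dist w l + dist l ζ := dist_triangle _ _ _
      _ ≤ R + d := add_le_add hw (le_of_eq (by rw [dist_eq_norm, hddef]))
      _ = (c + 1) * d := by rw [hRdef]; ring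
      _ < 2 * d := by nlinarith
  -- the function g and sets
  set g : ℂ → ℂ := fun z => f (z + l) - b with hgdef
  set U₀ : Set ℂ := (fun z : ℂ => z + l) ⁻¹' (stolz r ζ) with hU₀def
  have hU₀open : IsOpen U₀ :=
    isOpen_interior.preimage (continuous_id.add continuous_const)
  have htrans : DifferentiableOn ℂ (fun z : ℂ => z + l) U₀ :=
    (differentiable_id.add_const l).differentiableOn
  have hgdiff : DifferentiableOn ℂ g U₀ :=
    (hf.comp htrans (fun x hx => hx)).sub_const b
  have hgcont : ContinuousOn g U₀ := hgdiff.continuousOn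
  have hsubU : Metric.closedBall (0:ℂ) R ⊆ U₀ := by
    intro x hx
    have : x + l ∈ Metric.closedBall l R := by
      rw [Metric.mem_closedBall, dist_eq_norm]
      simpa [dist_eq_norm] using hx
    exact hball this
  set O : Set ℂ := U₀ ∩ (fun x => ‖g x‖) ⁻¹' Set.Ioi ε' with hOdef
  have hOopen : IsOpen O :=
    hgcont.norm.isOpen_inter_preimage hU₀open isOpen_Ioi
  set Eset : Set ℂ := Metric.closedBall (0:ℂ) R ∩ O with hEsetdef
  -- Eset is inside the translated exceptional set
  have hEsub' : Eset ⊆ (fun z : ℂ => z + l) ⁻¹' (E δ) := by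
    rintro x ⟨hx1, hxU, hxg⟩
    by_contra hxE
    have hw : x + l ∈ (stolz r ζ ∩ Metric.ball ζ δ) \ E δ := by
      have hxball : x + l ∈ Metric.closedBall l R := by
        rw [Metric.mem_closedBall, dist_eq_norm]
        simpa [dist_eq_norm] using hx1
      exact ⟨⟨hball hxball, hballδ hxball⟩, hxE⟩
    have hle := hap δ hδpos hδδ₁ (x + l) hw
    rw [Set.mem_preimage, Set.mem_Ioi] at hxg
    exact absurd hle (not_le.mpr hxg)
  have hcapEset : gammaCap Eset < ENNReal.ofReal (R * ε₁) := by
    have h1 : gammaCap Eset ≤ gammaCap (E δ) :=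
      (gammaCap_mono hEsub').trans (gammaCap_preimage_add_le (E δ) l)
    have h2 := hcap2 (by simpa [Real.dist_eq, abs_of_pos hδpos] using hδδ₂)
      (Set.mem_Ioi.mpr hδpos)
    rw [ENNReal.div_lt_iff (Or.inl (by simp [hδpos, ne_of_gt])) 
      (Or.inl (by simp))] at h2
    calc gammaCap Eset ≤ gammaCap (E δ) := h1
      _ < ENNReal.ofReal (c * ε₁ / 2) * ENNReal.ofReal δ := h2
      _ = ENNReal.ofReal (R * ε₁) := by
          rw [← ENNReal.ofReal_mul (by positivity)]
          congr 1
          rw [hRdef, hδdef]; ring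
  -- apply the mean value inequality
  have hkey := hMV R hR0 Eset Set.inter_subset_left hcapEset g
    ⟨U₀, hU₀open, hsubU, hgdiff⟩ 0 (Metric.mem_ball_self (by positivity))
  -- bound the integral
  set A : Set ℂ := Metric.closedBall (0:ℂ) R \ Eset with hAdef
  have hAmeas : MeasurableSet A :=
    measurableSet_closedBall.diff (measurableSet_closedBall.inter hOopen.measurableSet)
  have hbound : ∀ x ∈ A, ‖g x‖ ≤ ε' := by
    rintro x ⟨hx1, hx2⟩
    by_contra h
    push_neg at h
    exact hx2 ⟨hx1, hsubU hx1, Set.mem_Ioi.mpr h⟩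
  have hint : IntegrableOn (fun x => ‖g x‖) A volume := by
    have : IntegrableOn (fun x => ‖g x‖) (Metric.closedBall (0:ℂ) R) volume :=
      ((hgcont.mono hsubU).norm).integrableOn_compact (isCompact_closedBall _ _)
    exact this.mono_set Set.diff_subset
  have hAfin : volume A < ⊤ :=
    lt_of_le_of_lt (measure_mono Set.diff_subset) measure_closedBall_lt_top
  have hI1 : ∫ x in A, ‖g x‖ ≤ ∫ x in A, ε' := by
    refine setIntegral_mono_on hint ?_ hAmeas hbound
    exact (integrableOn_const_iff (by simp)).mpr (Or.inr hAfin)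
  have hI2 : ∫ x in A, (ε' : ℝ) = (volume A).toReal * ε' := by
    rw [setIntegral_const, smul_eq_mul]
    rfl
  have hvol : (volume A).toReal ≤ Real.pi * R ^ 2 := by
    have h1 : volume A ≤ volume (Metric.closedBall (0:ℂ) R) :=
      measure_mono Set.diff_subset
    have h2 : (volume (Metric.closedBall (0:ℂ) R)).toReal = Real.pi * R ^ 2 := by
      rw [Complex.volume_closedBall]
      rw [ENNReal.toReal_mul, ENNReal.toReal_pow, ENNReal.toReal_ofReal hR0.le]
      simp [mul_comm]
    rw [← h2]
    exact ENNReal.toReal_mono (measure_closedBall_lt_top).ne h1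
  have hInn : (0:ℝ) ≤ ∫ x in A, ‖g x‖ := integral_nonneg fun x => norm_nonneg _
  have hIle : ∫ x in A, ‖g x‖ ≤ ε' * (Real.pi * R ^ 2) := by
    calc ∫ x in A, ‖g x‖ ≤ (volume A).toReal * ε' := hI1.trans (le_of_eq hI2)
      _ ≤ (Real.pi * R ^ 2) * ε' := mul_le_mul_of_nonneg_right hvol hε'0.le
      _ = ε' * (Real.pi * R ^ 2) := by ring
  have hπR : (0:ℝ) < Real.pi * R ^ 2 := by positivity
  -- final chain
  have hg0 : g 0 = f l - b := by rw [hgdef]; simp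
  rw [dist_eq_norm, ← hg0]
  have hstep1 : ‖g 0‖ ≤ C₁ / (Real.pi * R ^ 2) * ∫ x in A, ‖g x‖ := hkey
  have hstep2 : C₁ / (Real.pi * R ^ 2) * ∫ x in A, ‖g x‖ ≤
      C / (Real.pi * R ^ 2) * ∫ x in A, ‖g x‖ := by
    exact mul_le_mul_of_nonneg_right
      (div_le_div_of_nonneg_right (le_max_left C₁ 1) hπR.le) hInn
  have hstep3 : C / (Real.pi * R ^ 2) * ∫ x in A, ‖g x‖ ≤
      C / (Real.pi * R ^ 2) * (ε' * (Real.pi * R ^ 2)) :=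
    mul_le_mul_of_nonneg_left hIle (by positivity)
  have hstep4 : C / (Real.pi * R ^ 2) * (ε' * (Real.pi * R ^ 2)) = C * ε' := by
    field_simp
  have hfin : C * ε' = ε / 2 := by
    rw [hε'def]
    field_simp
  calc ‖g 0‖ ≤ C₁ / (Real.pi * R ^ 2) * ∫ x in A, ‖g x‖ := hstep1
    _ ≤ C / (Real.pi * R ^ 2) * ∫ x in A, ‖g x‖ := hstep2
    _ ≤ C / (Real.pi * R ^ 2) * (ε' * (Real.pi * R ^ 2)) := hstep3
    _ = C * ε' := hstep4
    _ = ε / 2 := hfin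
    _ < ε := by linarith
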